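/- arXiv:2204.02671 — 3 statements merged into one kernel-verified Lean document; each statement's English description precedes it below -/
import Mathlib

section
/- Let F and F̃ be real p×m matrices. Then the subspaces V = Image [I; F] and W = Image [I; F̃] of ℝ^{m+p} (where [I; F] denotes the block matrix stacking the m×m identity on top of F) satisfy: the gap between V and W (the operator 2-norm of the difference of orthogonal projections onto V and W) is at most ‖F − F̃‖₂. -/
open Matrix

/-- Operator (spectral) norm of a real matrix, induced by Euclidean norms. -/
noncomputable def specNorm {p m : Type*} [Fintype p] [Fintype m] [DecidableEq m]
    (A : Matrix p m ℝ) : ℝ :=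
  ‖LinearMap.toContinuousLinearMap (Matrix.toEuclideanLin A)‖

/-- The orthogonal projection onto a subspace, as an endomorphism. -/
noncomputable def projCLM {N : Type*} [Fintype N] [DecidableEq N]
    (V : Submodule ℝ (EuclideanSpace ℝ N)) :
    EuclideanSpace ℝ N →L[ℝ] EuclideanSpace ℝ N :=
  V.subtypeL.comp (Submodule.orthogonalProjection V)

/-- The gap between two subspaces of ℝ^N. -/
noncomputable def gap {N : Type*} [Fintype N] [DecidableEq N]
    (V W : Submodule ℝ (EuclideanSpace ℝ N)) : ℝ :=
  ‖projCLM V - projCLM W‖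

section Aux
variable {m p : ℕ}

lemma aux_norm_x_le (F : Matrix (Fin p) (Fin m) ℝ) (x : EuclideanSpace ℝ (Fin m)) :
    ‖x‖ ≤ ‖Matrix.toEuclideanLin (Matrix.fromRows (1 : Matrix (Fin m) (Fin m) ℝ) F) x‖ := by
  rw [EuclideanSpace.norm_eq, EuclideanSpace.norm_eq]
  apply Real.sqrt_le_sqrt
  rw [Fintype.sum_sum_type]
  have h1 : ∀ i : Fin m,
      ‖(Matrix.toEuclideanLin (Matrix.fromRows (1 : Matrix (Fin m) (Fin m) ℝ) F) x) (Sum.inl i)‖ ^ 2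
        = ‖x i‖ ^ 2 := by
    intro i; simp [Matrix.toEuclideanLin_apply, Matrix.fromRows_mulVec]
  simp only [h1]
  have : (0:ℝ) ≤ ∑ j : Fin p,
      ‖(Matrix.toEuclideanLin (Matrix.fromRows (1 : Matrix (Fin m) (Fin m) ℝ) F) x) (Sum.inr j)‖ ^ 2 :=
    Finset.sum_nonneg fun _ _ => sq_nonneg _
  linarith

lemma aux_norm_diff (F Ft : Matrix (Fin p) (Fin m) ℝ) (x : EuclideanSpace ℝ (Fin m)) :
    ‖Matrix.toEuclideanLin (Matrix.fromRows (1 : Matrix (Fin m) (Fin m) ℝ) F) x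
      - Matrix.toEuclideanLin (Matrix.fromRows (1 : Matrix (Fin m) (Fin m) ℝ) Ft) x‖
    = ‖Matrix.toEuclideanLin (F - Ft) x‖ := by
  rw [EuclideanSpace.norm_eq, EuclideanSpace.norm_eq]
  congr 1
  rw [Fintype.sum_sum_type]
  have h1 : ∀ i : Fin m,
      ‖(Matrix.toEuclideanLin (Matrix.fromRows (1 : Matrix (Fin m) (Fin m) ℝ) F) x
        - Matrix.toEuclideanLin (Matrix.fromRows (1 : Matrix (Fin m) (Fin m) ℝ) Ft) x) (Sum.inl i)‖ ^ 2
        = 0 := by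
    intro i
    simp [Matrix.toEuclideanLin_apply, Matrix.fromRows_mulVec]
  have h2 : ∀ j : Fin p,
      ‖(Matrix.toEuclideanLin (Matrix.fromRows (1 : Matrix (Fin m) (Fin m) ℝ) F) x
        - Matrix.toEuclideanLin (Matrix.fromRows (1 : Matrix (Fin m) (Fin m) ℝ) Ft) x) (Sum.inr j)‖ ^ 2
        = ‖(Matrix.toEuclideanLin (F - Ft) x) j‖ ^ 2 := by
    intro j
    simp [Matrix.toEuclideanLin_apply, Matrix.fromRows_mulVec, Matrix.sub_mulVec]
  simp only [h1, h2, Finset.sum_const_zero, zero_add]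

/-- Distance from a point of V = range [I;F] to W = range [I;Ft] is at most specNorm (F-Ft). -/
lemma aux_dist_le (F Ft : Matrix (Fin p) (Fin m) ℝ) (v : EuclideanSpace ℝ (Fin m ⊕ Fin p))
    (hv : v ∈ LinearMap.range
      (Matrix.toEuclideanLin (Matrix.fromRows (1 : Matrix (Fin m) (Fin m) ℝ) F))) :
    ‖v - projCLM (LinearMap.range
        (Matrix.toEuclideanLin (Matrix.fromRows (1 : Matrix (Fin m) (Fin m) ℝ) Ft))) v‖
      ≤ specNorm (F - Ft) * ‖v‖ := by
  obtain ⟨x, rfl⟩ := hv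
  set W := LinearMap.range
      (Matrix.toEuclideanLin (Matrix.fromRows (1 : Matrix (Fin m) (Fin m) ℝ) Ft))
  set v := Matrix.toEuclideanLin (Matrix.fromRows (1 : Matrix (Fin m) (Fin m) ℝ) F) x with hvdef
  have hw : Matrix.toEuclideanLin (Matrix.fromRows (1 : Matrix (Fin m) (Fin m) ℝ) Ft) x ∈ W :=
    ⟨x, rfl⟩
  have h1 : ‖v - projCLM W v‖
      ≤ ‖v - Matrix.toEuclideanLin (Matrix.fromRows (1 : Matrix (Fin m) (Fin m) ℝ) Ft) x‖ := by
    have : projCLM W v = W.starProjection v := rfl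
    rw [this, Submodule.starProjection_minimal]
    exact ciInf_le ⟨0, by rintro r ⟨z, rfl⟩; positivity⟩
      (⟨_, hw⟩ : W)
  have h2 : ‖v - Matrix.toEuclideanLin (Matrix.fromRows (1 : Matrix (Fin m) (Fin m) ℝ) Ft) x‖
      ≤ specNorm (F - Ft) * ‖x‖ := by
    rw [hvdef, aux_norm_diff]
    exact (LinearMap.toContinuousLinearMap (Matrix.toEuclideanLin (F - Ft))).le_opNorm x
  have h3 : ‖x‖ ≤ ‖v‖ := aux_norm_x_le F x
  calc ‖v - projCLM W v‖ ≤ specNorm (F - Ft) * ‖x‖ := h1.trans h2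
    _ ≤ specNorm (F - Ft) * ‖v‖ :=
        mul_le_mul_of_nonneg_left h3 (norm_nonneg _)

end Aux

section Aux2
variable {m p : ℕ}

/-- If z is orthogonal to V = range [I;F], then its projection onto W = range [I;Ft] is small. -/
lemma aux_proj_orth_le (F Ft : Matrix (Fin p) (Fin m) ℝ) (z : EuclideanSpace ℝ (Fin m ⊕ Fin p))
    (hz : z ∈ (LinearMap.range
      (Matrix.toEuclideanLin (Matrix.fromRows (1 : Matrix (Fin m) (Fin m) ℝ) F)))ᗮ) :
    ‖projCLM (LinearMap.range
        (Matrix.toEuclideanLin (Matrix.fromRows (1 : Matrix (Fin m) (Fin m) ℝ) Ft))) z‖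
      ≤ specNorm (Ft - F) * ‖z‖ := by
  set V := LinearMap.range
      (Matrix.toEuclideanLin (Matrix.fromRows (1 : Matrix (Fin m) (Fin m) ℝ) F))
  set W := LinearMap.range
      (Matrix.toEuclideanLin (Matrix.fromRows (1 : Matrix (Fin m) (Fin m) ℝ) Ft))
  set w : EuclideanSpace ℝ (Fin m ⊕ Fin p) := projCLM W z with hwdef
  have hwW : w ∈ W := (Submodule.orthogonalProjection W z).2
  have hinner1 : (inner ℝ w (z - w) : ℝ) = 0 :=
    real_inner_comm w (z - w) ▸
      (Submodule.mem_orthogonal W (z - w)).mp (Submodule.sub_starProjection_mem_orthogonal z) w hwW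
  have h1 : ‖w‖ ^ 2 = (inner ℝ w z : ℝ) := by
    have hzz : w + (z - w) = z := by abel
    have : (inner ℝ w z : ℝ) = inner ℝ w w + inner ℝ w (z - w) := by
      rw [← inner_add_right, hzz]
    rw [this, hinner1, add_zero, real_inner_self_eq_norm_sq]
  have h2 : (inner ℝ (projCLM V w) z : ℝ) = 0 :=
    (Submodule.mem_orthogonal V z).mp hz _ (Submodule.orthogonalProjection V w).2
  have h3 : (inner ℝ w z : ℝ) = inner ℝ (w - projCLM V w) z := by
    rw [inner_sub_left, h2, sub_zero]
  have h4 : ‖w - projCLM V w‖ ≤ specNorm (Ft - F) * ‖w‖ := aux_dist_le Ft F w hwW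
  have h5 : ‖w‖ ^ 2 ≤ specNorm (Ft - F) * ‖w‖ * ‖z‖ := by
    rw [h1, h3]
    calc (inner ℝ (w - projCLM V w) z : ℝ) ≤ ‖w - projCLM V w‖ * ‖z‖ := real_inner_le_norm _ _
      _ ≤ specNorm (Ft - F) * ‖w‖ * ‖z‖ :=
          mul_le_mul_of_nonneg_right h4 (norm_nonneg _)
  rcases eq_or_lt_of_le (norm_nonneg w) with h0 | h0
  · rw [← h0]
    exact mul_nonneg (by rw [specNorm]; exact norm_nonneg _) (norm_nonneg _)
  · have := (mul_le_mul_iff_of_pos_right h0).mp (by nlinarith : ‖w‖ * ‖w‖ ≤ specNorm (Ft - F) * ‖z‖ * ‖w‖)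
    exact this

end Aux2

theorem gap_image_le {m p : ℕ} (F Ft : Matrix (Fin p) (Fin m) ℝ) :
    gap (LinearMap.range (Matrix.toEuclideanLin (Matrix.fromRows (1 : Matrix (Fin m) (Fin m) ℝ) F)))
        (LinearMap.range (Matrix.toEuclideanLin (Matrix.fromRows (1 : Matrix (Fin m) (Fin m) ℝ) Ft)))
      ≤ specNorm (F - Ft) := by
  set V := LinearMap.range
      (Matrix.toEuclideanLin (Matrix.fromRows (1 : Matrix (Fin m) (Fin m) ℝ) F))
  set W := LinearMap.range
      (Matrix.toEuclideanLin (Matrix.fromRows (1 : Matrix (Fin m) (Fin m) ℝ) Ft))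
  set K := specNorm (F - Ft) with hKdef
  have hK0 : 0 ≤ K := norm_nonneg _
  have hK' : specNorm (Ft - F) = K := by
    rw [hKdef, specNorm, specNorm, ← neg_sub F Ft, map_neg, map_neg, norm_neg]
  rw [gap]
  apply ContinuousLinearMap.opNorm_le_bound _ hK0
  intro u
  set a : EuclideanSpace ℝ (Fin m ⊕ Fin p) := projCLM V u with hadef
  set b : EuclideanSpace ℝ (Fin m ⊕ Fin p) := u - a with hbdef
  have haV : a ∈ V := (Submodule.orthogonalProjection V u).2
  have hbV : b ∈ Vᗮ := Submodule.sub_starProjection_mem_orthogonal u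
  have hdecomp : (projCLM V - projCLM W) u = (a - projCLM W a) - projCLM W b := by
    have hu : u = a + b := by rw [hbdef]; abel
    simp only [ContinuousLinearMap.sub_apply]
    rw [show projCLM W u = projCLM W a + projCLM W b by rw [hu, map_add]]
    abel
  have horth : (inner ℝ (a - projCLM W a) (projCLM W b) : ℝ) = 0 := by
    rw [real_inner_comm]
    exact (Submodule.mem_orthogonal W (a - projCLM W a)).mp
      (Submodule.sub_starProjection_mem_orthogonal a) _ (Submodule.orthogonalProjection W b).2
  have hpyth : ‖(a - projCLM W a) - projCLM W b‖ ^ 2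
      = ‖a - projCLM W a‖ ^ 2 + ‖projCLM W b‖ ^ 2 := by
    rw [norm_sub_sq_real, horth]; ring
  have hub : ‖a‖ ^ 2 + ‖b‖ ^ 2 = ‖u‖ ^ 2 := by
    have hab : (inner ℝ a b : ℝ) = 0 := (Submodule.mem_orthogonal V b).mp hbV a haV
    have hu : u = a + b := by rw [hbdef]; abel
    rw [hu, norm_add_sq_real, hab]; ring
  have h1 : ‖a - projCLM W a‖ ≤ K * ‖a‖ := aux_dist_le F Ft a haV
  have h2 : ‖projCLM W b‖ ≤ K * ‖b‖ := hK' ▸ aux_proj_orth_le F Ft b hbV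
  have hsq : ‖(projCLM V - projCLM W) u‖ ^ 2 ≤ (K * ‖u‖) ^ 2 := by
    rw [hdecomp, hpyth]
    have e1 : ‖a - projCLM W a‖ ^ 2 ≤ (K * ‖a‖) ^ 2 :=
      pow_le_pow_left₀ (norm_nonneg _) h1 2
    have e2 : ‖projCLM W b‖ ^ 2 ≤ (K * ‖b‖) ^ 2 :=
      pow_le_pow_left₀ (norm_nonneg _) h2 2
    calc ‖a - projCLM W a‖ ^ 2 + ‖projCLM W b‖ ^ 2
        ≤ (K * ‖a‖) ^ 2 + (K * ‖b‖) ^ 2 := add_le_add e1 e2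
      _ = (K * ‖u‖) ^ 2 := by rw [mul_pow, mul_pow, mul_pow, ← hub]; ring
  have := Real.sqrt_le_sqrt hsq
  rwa [Real.sqrt_sq (norm_nonneg _), Real.sqrt_sq (by positivity)] at this
end

section
/- Let F and F̃ be real p×m matrices, and let V = Image [I; F] and W = Image [I; F̃] be subspaces of ℝ^{m+p}. Then gap(V,W) ≥ ‖F − F̃‖₂ / (√(1+‖F‖₂²) · √(1+‖F̃‖₂²)). -/
set_option synthInstance.maxHeartbeats 1000000
set_option maxHeartbeats 1000000

open Matrix

lemma splitNormSq {m p : ℕ} (z : EuclideanSpace ℝ (Fin m ⊕ Fin p))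
    (a : EuclideanSpace ℝ (Fin m)) (b : EuclideanSpace ℝ (Fin p))
    (ha : ∀ i, z (Sum.inl i) = a i) (hb : ∀ j, z (Sum.inr j) = b j) :
    ‖z‖ ^ 2 = ‖a‖ ^ 2 + ‖b‖ ^ 2 := by
  rw [EuclideanSpace.norm_eq z, EuclideanSpace.norm_eq a, EuclideanSpace.norm_eq b,
    Real.sq_sqrt (by positivity), Real.sq_sqrt (by positivity),
    Real.sq_sqrt (by positivity), Fintype.sum_sum_type]
  simp [ha, hb]

lemma le_sqrt_mul_of_sq_le {d t s : ℝ} (hd : 0 ≤ d) (hs : 0 ≤ s) (ht : 0 ≤ t)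
    (h : d ^ 2 ≤ t * s ^ 2) : d ≤ Real.sqrt t * s := by
  calc d = Real.sqrt (d ^ 2) := (Real.sqrt_sq hd).symm
    _ ≤ Real.sqrt (t * s ^ 2) := Real.sqrt_le_sqrt h
    _ = Real.sqrt t * s := by rw [Real.sqrt_mul ht, Real.sqrt_sq hs]

theorem gap_image_ge {m p : ℕ} (F Ft : Matrix (Fin p) (Fin m) ℝ) :
    specNorm (F - Ft) / (Real.sqrt (1 + specNorm F ^ 2) * Real.sqrt (1 + specNorm Ft ^ 2))
      ≤ gap (LinearMap.range (Matrix.toEuclideanLin (Matrix.fromRows (1 : Matrix (Fin m) (Fin m) ℝ) F)))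
        (LinearMap.range (Matrix.toEuclideanLin (Matrix.fromRows (1 : Matrix (Fin m) (Fin m) ℝ) Ft))) := by
  set V := LinearMap.range (Matrix.toEuclideanLin (Matrix.fromRows (1 : Matrix (Fin m) (Fin m) ℝ) F)) with hV
  set W := LinearMap.range (Matrix.toEuclideanLin (Matrix.fromRows (1 : Matrix (Fin m) (Fin m) ℝ) Ft)) with hW
  have hg0 : 0 ≤ gap V W := norm_nonneg _
  rw [div_le_iff₀ (by positivity)]
  show specNorm (F - Ft) ≤ _
  unfold specNorm
  apply ContinuousLinearMap.opNorm_le_bound _ (by positivity)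
  intro x
  set u : EuclideanSpace ℝ (Fin m ⊕ Fin p) :=
    Matrix.toEuclideanLin (Matrix.fromRows (1 : Matrix (Fin m) (Fin m) ℝ) F) x with hu_def
  have huV : u ∈ V := LinearMap.mem_range_self _ x
  set w : EuclideanSpace ℝ (Fin m ⊕ Fin p) := projCLM W u with hw_def
  have hwW : w ∈ W := by
    rw [hw_def]
    exact Submodule.coe_mem (Submodule.orthogonalProjection W u)
  obtain ⟨y, hy⟩ := hwW
  have hPV : projCLM V u = u := by
    exact Submodule.starProjection_eq_self_iff.mpr huV
  have hdiff : ‖u - w‖ ≤ gap V W * ‖u‖ := by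
    have := (projCLM V - projCLM W).le_opNorm u
    simpa [ContinuousLinearMap.sub_apply, hPV, ← hw_def, gap] using this
  -- component identities
  have hul : ∀ i, u (Sum.inl i) = x i := by
    intro i
    show (Matrix.fromRows (1 : Matrix (Fin m) (Fin m) ℝ) F *ᵥ
      (WithLp.equiv 2 _ x)) (Sum.inl i) = x i
    simp [Matrix.fromRows_mulVec, Matrix.one_mulVec]
  have hur : ∀ j, u (Sum.inr j) = Matrix.toEuclideanLin F x j := by
    intro j
    show (Matrix.fromRows (1 : Matrix (Fin m) (Fin m) ℝ) F *ᵥ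
      (WithLp.equiv 2 _ x)) (Sum.inr j) = _
    simp [Matrix.fromRows_mulVec]
  have hwl : ∀ i, w (Sum.inl i) = y i := by
    intro i
    rw [← hy]
    show (Matrix.fromRows (1 : Matrix (Fin m) (Fin m) ℝ) Ft *ᵥ
      (WithLp.equiv 2 _ y)) (Sum.inl i) = y i
    simp [Matrix.fromRows_mulVec, Matrix.one_mulVec]
  have hwr : ∀ j, w (Sum.inr j) = Matrix.toEuclideanLin Ft y j := by
    intro j
    rw [← hy]
    show (Matrix.fromRows (1 : Matrix (Fin m) (Fin m) ℝ) Ft *ᵥ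
      (WithLp.equiv 2 _ y)) (Sum.inr j) = _
    simp [Matrix.fromRows_mulVec]
  clear_value u w
  clear hu_def hw_def hy huV hPV
  -- norms
  have hFx : ‖Matrix.toEuclideanLin F x‖ ≤ specNorm F * ‖x‖ :=
    (LinearMap.toContinuousLinearMap (Matrix.toEuclideanLin F)).le_opNorm x
  have hunorm : ‖u‖ ^ 2 = ‖x‖ ^ 2 + ‖Matrix.toEuclideanLin F x‖ ^ 2 :=
    splitNormSq u x (Matrix.toEuclideanLin F x) hul hur
  have hu_le : ‖u‖ ≤ Real.sqrt (1 + specNorm F ^ 2) * ‖x‖ := by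
    refine le_sqrt_mul_of_sq_le (norm_nonneg _) (norm_nonneg _) (by positivity) ?_
    nlinarith [norm_nonneg x, norm_nonneg (Matrix.toEuclideanLin F x), norm_nonneg u]
  have hsplit : ‖u - w‖ ^ 2 = ‖x - y‖ ^ 2
      + ‖Matrix.toEuclideanLin F x - Matrix.toEuclideanLin Ft y‖ ^ 2 := by
    refine splitNormSq (u - w) (x - y) (Matrix.toEuclideanLin F x - Matrix.toEuclideanLin Ft y)
      (fun i => ?_) (fun j => ?_)
    · simp [PiLp.sub_apply, hul i, hwl i]
    · simp [PiLp.sub_apply, hur j, hwr j]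
  have hd : ‖Matrix.toEuclideanLin (F - Ft) x‖
      ≤ ‖Matrix.toEuclideanLin F x - Matrix.toEuclideanLin Ft y‖ + specNorm Ft * ‖x - y‖ := by
    have heq : Matrix.toEuclideanLin (F - Ft) x
        = (Matrix.toEuclideanLin F x - Matrix.toEuclideanLin Ft y)
          - Matrix.toEuclideanLin Ft (x - y) := by
      rw [map_sub, LinearMap.sub_apply, map_sub]
      abel
    rw [heq]
    refine (norm_sub_le _ _).trans ?_
    gcongr
    exact (LinearMap.toContinuousLinearMap (Matrix.toEuclideanLin Ft)).le_opNorm (x - y)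
  have hcs : ‖Matrix.toEuclideanLin (F - Ft) x‖
      ≤ Real.sqrt (1 + specNorm Ft ^ 2) * ‖u - w‖ := by
    refine le_sqrt_mul_of_sq_le (norm_nonneg _) (norm_nonneg _) (by positivity) ?_
    have hc : (0:ℝ) ≤ specNorm Ft := norm_nonneg _
    nlinarith [norm_nonneg (x - y),
      norm_nonneg (Matrix.toEuclideanLin F x - Matrix.toEuclideanLin Ft y),
      norm_nonneg (Matrix.toEuclideanLin (F - Ft) x), norm_nonneg (u - w),
      sq_nonneg (specNorm Ft * ‖Matrix.toEuclideanLin F x - Matrix.toEuclideanLin Ft y‖ - ‖x - y‖),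
      sq_nonneg (‖Matrix.toEuclideanLin F x - Matrix.toEuclideanLin Ft y‖ + specNorm Ft * ‖x - y‖
        - ‖Matrix.toEuclideanLin (F - Ft) x‖)]
  calc ‖Matrix.toEuclideanLin (F - Ft) x‖
      ≤ Real.sqrt (1 + specNorm Ft ^ 2) * ‖u - w‖ := hcs
    _ ≤ Real.sqrt (1 + specNorm Ft ^ 2) * (gap V W * ‖u‖) := by
        gcongr
    _ ≤ Real.sqrt (1 + specNorm Ft ^ 2) * (gap V W * (Real.sqrt (1 + specNorm F ^ 2) * ‖x‖)) := by
        gcongr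
    _ = gap V W * (Real.sqrt (1 + specNorm F ^ 2) * Real.sqrt (1 + specNorm Ft ^ 2)) * ‖x‖ := by
        ring
end

section
/- Let V and W be subspaces of ℝ^N with orthogonal projections P_V and P_W. Then ‖P_V − P_W‖₂ = max{ ‖(I − P_W) P_V‖₂ , ‖(I − P_V) P_W‖₂ }. -/
set_option maxHeartbeats 1000000

open Matrix

section aux

open ContinuousLinearMap

variable {N : ℕ}

lemma projCLM_norm_le_one (V : Submodule ℝ (EuclideanSpace ℝ (Fin N))) : ‖projCLM V‖ ≤ 1 := by
  refine le_trans (opNorm_comp_le _ _) ?_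
  have h1 : ‖V.subtypeL‖ ≤ 1 := by
    refine opNorm_le_bound _ zero_le_one ?_
    simp
  nlinarith [Submodule.orthogonalProjectionOnto_norm_le V, norm_nonneg (Submodule.orthogonalProjection V),
    norm_nonneg V.subtypeL]

lemma id_sub_projCLM (V : Submodule ℝ (EuclideanSpace ℝ (Fin N))) :
    ContinuousLinearMap.id ℝ (EuclideanSpace ℝ (Fin N)) - projCLM V = projCLM Vᗮ := by
  ext x; simp [projCLM]

theorem gap_eq_max_directed' (V W : Submodule ℝ (EuclideanSpace ℝ (Fin N))) :
    ‖projCLM V - projCLM W‖ =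
      max ‖(ContinuousLinearMap.id ℝ (EuclideanSpace ℝ (Fin N)) - projCLM W).comp (projCLM V)‖
          ‖(ContinuousLinearMap.id ℝ (EuclideanSpace ℝ (Fin N)) - projCLM V).comp (projCLM W)‖ := by
  set P := projCLM V with hP
  set Q := projCLM W with hQ
  set I : EuclideanSpace ℝ (Fin N) →L[ℝ] EuclideanSpace ℝ (Fin N) := ContinuousLinearMap.id ℝ (EuclideanSpace ℝ (Fin N)) with hI
  set A := (I - Q).comp P with hA
  set B := (I - P).comp Q with hB
  set M := max ‖A‖ ‖B‖ with hM
  have hM0 : 0 ≤ M := le_trans (norm_nonneg A) (le_max_left _ _)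
  -- lower bound
  have low1 : ‖A‖ ≤ ‖P - Q‖ := by
    have hcomp : A = (I - Q).comp (P - Q) := by
      ext x
      simp [hA, hP, hQ, hI, projCLM, ContinuousLinearMap.sub_apply, ContinuousLinearMap.comp_apply, map_sub, fun y => Submodule.starProjection_eq_self_iff.mpr (Submodule.starProjection_apply_mem V y), fun y => Submodule.starProjection_eq_self_iff.mpr (Submodule.starProjection_apply_mem W y)]
    calc ‖A‖ ≤ ‖I - Q‖ * ‖P - Q‖ := by rw [hcomp]; exact opNorm_comp_le _ _
    _ ≤ 1 * ‖P - Q‖ := by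
        have := (id_sub_projCLM W) ▸ projCLM_norm_le_one Wᗮ
        exact mul_le_mul_of_nonneg_right this (norm_nonneg _)
    _ = ‖P - Q‖ := one_mul _
  have low2 : ‖B‖ ≤ ‖P - Q‖ := by
    have hcomp : B = (I - P).comp (Q - P) := by
      ext x
      simp [hB, hP, hQ, hI, projCLM, ContinuousLinearMap.sub_apply, ContinuousLinearMap.comp_apply, map_sub, fun y => Submodule.starProjection_eq_self_iff.mpr (Submodule.starProjection_apply_mem V y), fun y => Submodule.starProjection_eq_self_iff.mpr (Submodule.starProjection_apply_mem W y)]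
    calc ‖B‖ ≤ ‖I - P‖ * ‖Q - P‖ := by rw [hcomp]; exact opNorm_comp_le _ _
    _ ≤ 1 * ‖Q - P‖ := by
        have := (id_sub_projCLM V) ▸ projCLM_norm_le_one Vᗮ
        exact mul_le_mul_of_nonneg_right this (norm_nonneg _)
    _ = ‖P - Q‖ := by rw [one_mul, norm_sub_rev]
  -- the norm of Q ∘ (I - P) equals ‖B‖ via adjoints
  have hQP : ‖Q.comp (I - P)‖ = ‖B‖ := by
    have hsaP : IsSelfAdjoint P := isSelfAdjoint_starProjection V
    have hsaQ : IsSelfAdjoint Q := isSelfAdjoint_starProjection W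
    have hadj : ContinuousLinearMap.adjoint (Q.comp (I - P)) = B := by
      rw [ContinuousLinearMap.adjoint_comp, map_sub, hsaP.adjoint_eq, hsaQ.adjoint_eq]
      congr 1
      rw [hI, ContinuousLinearMap.adjoint_id]
    conv_rhs => rw [← hadj]
    exact (ContinuousLinearMap.adjoint.norm_map (Q.comp (I - P))).symm
  -- upper bound
  have up : ‖P - Q‖ ≤ M := by
    refine opNorm_le_bound _ hM0 fun x => ?_
    set u := A x with hu
    set v := Q (x - P x) with hv
    have hdecomp : (P - Q) x = u - v := by
      simp [hu, hv, hA, ContinuousLinearMap.sub_apply, ContinuousLinearMap.comp_apply, map_sub]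
      abel
    have huW : u ∈ Wᗮ := by
      have : u = P x - (Submodule.orthogonalProjection W (P x) : EuclideanSpace ℝ (Fin N)) := by
        simp [hu, hA, ContinuousLinearMap.sub_apply, ContinuousLinearMap.comp_apply, hQ, projCLM]
        rfl
      rw [this]
      exact W.sub_starProjection_mem_orthogonal (P x)
    have hvW : v ∈ W := by
      simp only [hv, hQ, projCLM, ContinuousLinearMap.comp_apply]
      exact (Submodule.orthogonalProjection W (x - P x)).2
    have hinner : inner ℝ u v = (0 : ℝ) :=
      Submodule.inner_left_of_mem_orthogonal hvW huW
    have pyth1 : ‖u - v‖ ^ 2 = ‖u‖ ^ 2 + ‖v‖ ^ 2 := by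
      rw [norm_sub_sq_real, hinner]; ring
    -- bound on u
    have hPidem : P (P x) = P x := by
      simp [hP, projCLM, Submodule.starProjection_eq_self_iff]
    have hbu : ‖u‖ ≤ M * ‖P x‖ := by
      have h1 : u = A (P x) := by
        simp [hu, hA, ContinuousLinearMap.sub_apply, ContinuousLinearMap.comp_apply, hPidem]
      calc ‖u‖ = ‖A (P x)‖ := by rw [h1]
      _ ≤ ‖A‖ * ‖P x‖ := le_opNorm _ _
      _ ≤ M * ‖P x‖ := mul_le_mul_of_nonneg_right (le_max_left _ _) (norm_nonneg _)
    -- bound on v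
    have hbv : ‖v‖ ≤ M * ‖x - P x‖ := by
      have hPI : P (x - P x) = 0 := by
        simp [map_sub, hPidem]
      have h1 : v = (Q.comp (I - P)) (x - P x) := by
        simp [hv, ContinuousLinearMap.sub_apply, ContinuousLinearMap.comp_apply, hPI]
        rfl
      calc ‖v‖ = ‖(Q.comp (I - P)) (x - P x)‖ := by rw [h1]
      _ ≤ ‖Q.comp (I - P)‖ * ‖x - P x‖ := le_opNorm _ _
      _ = ‖B‖ * ‖x - P x‖ := by rw [hQP]
      _ ≤ M * ‖x - P x‖ := mul_le_mul_of_nonneg_right (le_max_right _ _) (norm_nonneg _)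
    -- Pythagoras for x
    have hinner2 : inner ℝ (P x) (x - P x) = (0 : ℝ) := by
      have h1 : P x ∈ V := by
        simp only [hP, projCLM, ContinuousLinearMap.comp_apply]
        exact (Submodule.orthogonalProjection V x).2
      have h2 : x - P x ∈ Vᗮ := by
        have : x - P x = x - (Submodule.orthogonalProjection V x : EuclideanSpace ℝ (Fin N)) := by simp [hP, projCLM]
        rw [this]
        exact V.sub_starProjection_mem_orthogonal x
      exact Submodule.inner_right_of_mem_orthogonal h1 h2
    have pyth2 : ‖P x‖ ^ 2 + ‖x - P x‖ ^ 2 = ‖x‖ ^ 2 := by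
      have h3 : ‖x‖ ^ 2 = ‖P x + (x - P x)‖ ^ 2 := by rw [add_sub_cancel]
      rw [h3, norm_add_sq_real, hinner2]; ring
    have hsq : ‖(P - Q) x‖ ^ 2 ≤ (M * ‖x‖) ^ 2 := by
      rw [hdecomp, pyth1]
      have h1 : ‖u‖ ^ 2 ≤ (M * ‖P x‖) ^ 2 := by
        nlinarith [norm_nonneg u, norm_nonneg (P x)]
      have h2 : ‖v‖ ^ 2 ≤ (M * ‖x - P x‖) ^ 2 := by
        nlinarith [norm_nonneg v, norm_nonneg (x - P x)]
      calc ‖u‖ ^ 2 + ‖v‖ ^ 2 ≤ (M * ‖P x‖) ^ 2 + (M * ‖x - P x‖) ^ 2 := add_le_add h1 h2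
      _ = M ^ 2 * (‖P x‖ ^ 2 + ‖x - P x‖ ^ 2) := by ring
      _ = M ^ 2 * ‖x‖ ^ 2 := by rw [pyth2]
      _ = (M * ‖x‖) ^ 2 := by ring
    nlinarith [norm_nonneg ((P - Q) x), mul_nonneg hM0 (norm_nonneg x), hsq]
  exact le_antisymm up (max_le low1 low2)

end aux

theorem gap_eq_max_directed {N : ℕ} (V W : Submodule ℝ (EuclideanSpace ℝ (Fin N))) :
    ‖projCLM V - projCLM W‖ =
      max ‖(ContinuousLinearMap.id ℝ (EuclideanSpace ℝ (Fin N)) - projCLM W).comp (projCLM V)‖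
          ‖(ContinuousLinearMap.id ℝ (EuclideanSpace ℝ (Fin N)) - projCLM V).comp (projCLM W)‖ :=
  gap_eq_max_directed' V W
end
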